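/- For the balanced-part operators B_k on ℤ[f,z,v] defined by B_k(η) = ∑_{i ≤ k+1, j} η̄_{j,i} v^j z^{2k−2(i−1)} f^i where η̄_{j,i} = [v^j f^i z^{2k−2(i−1)}] η: (a) each B_k is ℤ-linear; (b) if η₁ is k₁-admissible and η₂ is k₂-admissible, then η₁·η₂ is (k₁+k₂+1)-admissible and B_{k₁+k₂+1}(η₁ η₂) = B_{k₁}(η₁)·B_{k₂}(η₂). -/

import Mathlib

/-- Variables of ℤ[f,z,v]: index 0 is f, index 1 is z, index 2 is v. -/
abbrev P3 := MvPolynomial (Fin 3) ℤ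

/-- The balanced-part operator B_k: keeps the monomials f^i z^l v^j with
i ≤ k+1 and l = 2k − 2(i−1). -/
noncomputable def balanced (k : ℤ) (η : P3) : P3 :=
  ∑ d ∈ η.support,
    if ((d 0 : ℤ) ≤ k + 1 ∧ (d 1 : ℤ) = 2 * k - 2 * ((d 0 : ℤ) - 1)) then
      MvPolynomial.monomial d (MvPolynomial.coeff d η)
    else 0

/-- k-admissibility: every monomial a f^i v^j z^l has
l ≥ max {0, 2k − 2(i−1)}. -/
def admissible (k : ℤ) (η : P3) : Prop :=
  ∀ d ∈ η.support, max 0 (2 * k - 2 * ((d 0 : ℤ) - 1)) ≤ (d 1 : ℤ)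

lemma coeff_balanced (k : ℤ) (η : P3) (d : Fin 3 →₀ ℕ) :
    (balanced k η).coeff d =
      if ((d 0 : ℤ) ≤ k + 1 ∧ (d 1 : ℤ) = 2 * k - 2 * ((d 0 : ℤ) - 1)) then η.coeff d else 0 := by
  unfold balanced
  rw [MvPolynomial.coeff_sum, Finset.sum_eq_single d]
  · split_ifs with h
    · simp [MvPolynomial.coeff_monomial]
    · simp
  · intro e _ hne
    split_ifs with h
    · simp [MvPolynomial.coeff_monomial, hne]
    · simp
  · intro hd
    rw [MvPolynomial.notMem_support_iff] at hd
    split_ifs with h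
    · simp [MvPolynomial.coeff_monomial, hd]
    · simp

/-- balanced-part operators are linear, and multiplicative on
admissible polynomials: the product of a k₁-admissible and a k₂-admissible
polynomial is (k₁+k₂+1)-admissible with
B_{k₁+k₂+1}(η₁η₂) = B_{k₁}(η₁)·B_{k₂}(η₂). -/
theorem balanced_linear_and_multiplicative :
    (∀ (k : ℤ) (η₁ η₂ : P3),
      balanced k (η₁ + η₂) = balanced k η₁ + balanced k η₂) ∧
    (∀ (k₁ k₂ : ℤ) (η₁ η₂ : P3), admissible k₁ η₁ → admissible k₂ η₂ →
      admissible (k₁ + k₂ + 1) (η₁ * η₂) ∧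
      balanced (k₁ + k₂ + 1) (η₁ * η₂) = balanced k₁ η₁ * balanced k₂ η₂) := by
  constructor
  · intro k η₁ η₂
    ext d
    simp only [coeff_balanced, MvPolynomial.coeff_add]
    split_ifs <;> simp
  · intro k₁ k₂ η₁ η₂ h₁ h₂
    constructor
    · intro d hd
      rw [MvPolynomial.mem_support_iff, MvPolynomial.coeff_mul] at hd
      obtain ⟨x, hx, hne⟩ := Finset.exists_ne_zero_of_sum_ne_zero hd
      rw [Finset.HasAntidiagonal.mem_antidiagonal] at hx
      have hc1 : η₁.coeff x.1 ≠ 0 := fun h => hne (by simp [h])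
      have hc2 : η₂.coeff x.2 ≠ 0 := fun h => hne (by simp [h])
      have a1 := h₁ x.1 (MvPolynomial.mem_support_iff.2 hc1)
      have a2 := h₂ x.2 (MvPolynomial.mem_support_iff.2 hc2)
      have hd0 : (d 0 : ℤ) = (x.1 0 : ℤ) + (x.2 0 : ℤ) := by
        rw [← hx, Finsupp.add_apply]; push_cast; ring
      have hd1 : (d 1 : ℤ) = (x.1 1 : ℤ) + (x.2 1 : ℤ) := by
        rw [← hx, Finsupp.add_apply]; push_cast; ring
      rw [max_le_iff] at a1 a2 ⊢
      omega
    · ext d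
      rw [coeff_balanced, MvPolynomial.coeff_mul, MvPolynomial.coeff_mul]
      split_ifs with hK
      · apply Finset.sum_congr rfl
        intro x hx
        rw [Finset.HasAntidiagonal.mem_antidiagonal] at hx
        rw [coeff_balanced, coeff_balanced]
        by_cases hc1 : η₁.coeff x.1 = 0
        · simp [hc1]
        by_cases hc2 : η₂.coeff x.2 = 0
        · simp [hc2]
        have a1 := h₁ x.1 (MvPolynomial.mem_support_iff.2 hc1)
        have a2 := h₂ x.2 (MvPolynomial.mem_support_iff.2 hc2)
        have hd0 : (d 0 : ℤ) = (x.1 0 : ℤ) + (x.2 0 : ℤ) := by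
          rw [← hx, Finsupp.add_apply]; push_cast; ring
        have hd1 : (d 1 : ℤ) = (x.1 1 : ℤ) + (x.2 1 : ℤ) := by
          rw [← hx, Finsupp.add_apply]; push_cast; ring
        rw [max_le_iff] at a1 a2
        have p1 : (x.1 0 : ℤ) ≤ k₁ + 1 ∧ (x.1 1 : ℤ) = 2 * k₁ - 2 * ((x.1 0 : ℤ) - 1) := by
          omega
        have p2 : (x.2 0 : ℤ) ≤ k₂ + 1 ∧ (x.2 1 : ℤ) = 2 * k₂ - 2 * ((x.2 0 : ℤ) - 1) := by
          omega
        rw [if_pos p1, if_pos p2]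
      · symm
        apply Finset.sum_eq_zero
        intro x hx
        rw [Finset.HasAntidiagonal.mem_antidiagonal] at hx
        rw [coeff_balanced, coeff_balanced]
        by_cases hc1 : η₁.coeff x.1 = 0
        · simp [hc1]
        by_cases hc2 : η₂.coeff x.2 = 0
        · simp [hc2]
        have hd0 : (d 0 : ℤ) = (x.1 0 : ℤ) + (x.2 0 : ℤ) := by
          rw [← hx, Finsupp.add_apply]; push_cast; ring
        have hd1 : (d 1 : ℤ) = (x.1 1 : ℤ) + (x.2 1 : ℤ) := by
          rw [← hx, Finsupp.add_apply]; push_cast; ring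
        split_ifs with q1 q2
        · exfalso; apply hK; constructor <;> omega
        all_goals simp
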